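/- For the RCA with initial state (α, β, γ) with α = 0 and |β| = |γ| > 0, the distribution is symmetric for all time: |X(k, n)| = |X(−k, n)| for all k ∈ ℤ, n ∈ ℕ. -/

import Mathlib

theorem stmt9 (θ : ℝ) (β γ : ℂ) (hβγ : ‖β‖ = ‖γ‖) (hpos : 0 < ‖β‖) (X : ℤ × ℕ → ℂ)
    (hrec : ∀ (k : ℤ) (n : ℕ),
      X (k, n + 2) = (Real.cos θ : ℂ) * (X (k + 1, n + 1) - X (k - 1, n + 1)) + X (k, n))
    (h00 : X (0, 0) = 0) (hm1 : X (-1, 1) = β) (hp1 : X (1, 1) = γ)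
    (h0 : ∀ k : ℤ, k ≠ 0 → X (k, 0) = 0)
    (h1 : ∀ k : ℤ, k ≠ -1 → k ≠ 1 → X (k, 1) = 0) :
    ∀ (k : ℤ) (n : ℕ), ‖X (k, n)‖ = ‖X (-k, n)‖ := by
  have hγ : γ ≠ 0 := by
    intro h; rw [h, norm_zero] at hβγ; exact absurd hβγ (ne_of_gt (hβγ ▸ hpos))
  have hγc : (starRingEnd ℂ) γ ≠ 0 := by simpa using hγ
  set c : ℂ := -β / (starRingEnd ℂ) γ with hc
  have key : ∀ n : ℕ, ∀ k : ℤ, X (k, n) = c * (-1) ^ n * (starRingEnd ℂ) (X (-k, n)) := by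
    intro n
    induction n using Nat.strong_induction_on with
    | _ n ih =>
      match n with
      | 0 =>
        intro k
        rcases eq_or_ne k 0 with rfl | hk
        · simp only [neg_zero, h00, map_zero, mul_zero]
        · rw [h0 k hk, h0 (-k) (neg_ne_zero.mpr hk)]; simp
      | 1 =>
        intro k
        rcases eq_or_ne k 1 with rfl | hk1
        · rw [hp1]
          show γ = c * (-1) ^ 1 * (starRingEnd ℂ) (X (-1, 1))
          have hbb : β * (starRingEnd ℂ) β = γ * (starRingEnd ℂ) γ := by
            have hns : Complex.normSq β = Complex.normSq γ := by
              rw [Complex.normSq_eq_norm_sq, Complex.normSq_eq_norm_sq, hβγ]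
            rw [Complex.mul_conj, Complex.mul_conj, hns]
          rw [hm1, hc]
          rw [show -β / (starRingEnd ℂ) γ * (-1) ^ 1 * (starRingEnd ℂ) β
              = β * (starRingEnd ℂ) β / (starRingEnd ℂ) γ by ring,
            hbb, mul_div_assoc, div_self hγc, mul_one]
        rcases eq_or_ne k (-1) with rfl | hkm1
        · rw [hm1]
          show β = c * (-1) ^ 1 * (starRingEnd ℂ) (X (1, 1))
          rw [hp1, hc]
          field_simp
        · rw [h1 k hkm1 hk1, h1 (-k) (by omega) (by omega)]; simp
      | (m + 2) =>
        intro k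
        have ih1 := ih (m + 1) (by omega)
        have ih0 := ih m (by omega)
        rw [hrec k m, hrec (-k) m]
        rw [ih1 (k + 1), ih1 (k - 1), ih0 k]
        have e1 : -(k + 1) = -k - 1 := by ring
        have e2 : -(k - 1) = -k + 1 := by ring
        rw [e1, e2]
        simp only [map_add, map_mul, map_sub, Complex.conj_ofReal, map_pow, map_neg, map_one]
        ring
  intro k n
  rw [key n k]
  have hcnorm : ‖c‖ = 1 := by
    rw [hc, norm_div, norm_neg, RCLike.norm_conj, hβγ, div_self (norm_ne_zero_iff.mpr hγ)]
  simp [hcnorm, RCLike.norm_conj]
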